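/- Let A ∈ ℝ^{m×k}, B ∈ ℝ^{m×s}, and f satisfy the standard assumption. Define α([A,B]) = min over columns c of [A,B] of min_{x ∈ Δ} ‖c - ([A,B] without column c)·x‖₂ and ν(R_B^f(A)) = min_j ‖R_B^f(a_j)‖₂. Then ν(R_B^f(A)) ≥ α([A,B]). -/

import Mathlib

noncomputable section

open scoped BigOperators

abbrev E (m : ℕ) := EuclideanSpace ℝ (Fin m)

def toE {m : ℕ} (x : Fin m → ℝ) : E m := WithLp.toLp 2 x

/-- The unit simplex `Δ = {y | y ≥ 0, ∑ y ≤ 1}`. -/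
def simplex (n : Type*) [Fintype n] : Set (n → ℝ) :=
  {y | (∀ i, 0 ≤ y i) ∧ ∑ i, y i ≤ 1}

/-- Assumption 2 of the paper: `f` is `μ`-strongly convex with `L`-Lipschitz
gradient `f'`, and `0` is its global minimizer with `f 0 = 0`. -/
structure GoodF {m : ℕ} (f : E m → ℝ) (f' : E m → E m) (μ L : ℝ) : Prop where
  mu_pos : 0 < μ
  grad : ∀ x, HasGradientAt f (f' x) x
  lip : ∀ x y : E m, ‖f' x - f' y‖ ≤ L * ‖x - y‖
  sconv : ∀ x y : E m, ∀ δ : ℝ, 0 ≤ δ → δ ≤ 1 →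
    f (δ • x + (1 - δ) • y) ≤ δ * f x + (1 - δ) * f y - μ / 2 * δ * (1 - δ) * ‖x - y‖ ^ 2
  f_zero : f 0 = 0
  min_zero : ∀ x, f 0 ≤ f x

/-- A minimizer over the unit simplex of `y ↦ f (x - B y)` (chosen via choice). -/
def argminSimplex {m : ℕ} {n : Type*} [Fintype n] (f : E m → ℝ)
    (B : Matrix (Fin m) n ℝ) (x : E m) : n → ℝ :=
  Classical.epsilon fun y => y ∈ simplex n ∧
    ∀ z ∈ simplex n, f (x - toE (B.mulVec y)) ≤ f (x - toE (B.mulVec z))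

/-- The residual `R_B^f(x) = x - B y*` where `y* = argmin_{y ∈ Δ} f (x - B y)`. -/
def resid {m : ℕ} {n : Type*} [Fintype n] (f : E m → ℝ)
    (B : Matrix (Fin m) n ℝ) (x : E m) : E m :=
  x - toE (B.mulVec (argminSimplex f B x))

/-- Column-wise residual matrix `R_B^f(A)`. -/
def residMat {m : ℕ} {n k : Type*} [Fintype n] (f : E m → ℝ)
    (B : Matrix (Fin m) n ℝ) (A : Matrix (Fin m) k ℝ) : Matrix (Fin m) k ℝ :=
  fun i j => resid f B (toE fun i' => A i' j) i

/-- `‖N‖_{1,2}`: the maximum `ℓ₂` column norm. -/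
def norm12 {m : ℕ} {n : Type*} [Fintype n] (N : Matrix (Fin m) n ℝ) : ℝ :=
  sSup {c | ∃ j, c = ‖toE fun i => N i j‖}

/-- `α(W)`: minimum distance between a column of `W` and the convex hull of the
other columns of `W` and the origin. -/
def alpha {m r : ℕ} (W : Matrix (Fin m) (Fin r) ℝ) : ℝ :=
  sInf {c | ∃ (j : Fin r) (x : Fin r → ℝ), x ∈ simplex (Fin r) ∧ x j = 0 ∧
    c = ‖toE (fun i => W i j) - toE (W.mulVec x)‖}

/-- `σ(W)`: smallest singular value (`min_{‖z‖₂ ≥ 1} ‖Wz‖₂`) if `m ≥ r`, and `0` if `m < r`. -/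
def smin {m r : ℕ} (W : Matrix (Fin m) (Fin r) ℝ) : ℝ :=
  if r ≤ m then sInf {c | ∃ z : Fin r → ℝ, 1 ≤ ‖toE z‖ ∧ c = ‖toE (W.mulVec z)‖} else 0

/-- `[B, x]`: append the column `x` to `B`. -/
def appendCol {m s : ℕ} (B : Matrix (Fin m) (Fin s) ℝ) (x : E m) :
    Matrix (Fin m) (Fin (s + 1)) ℝ :=
  fun i => Fin.snoc (fun j => B i j) (x i)

/-- `[A, B]`: horizontal concatenation. -/
def appendMat {m k s : ℕ} (A : Matrix (Fin m) (Fin k) ℝ) (B : Matrix (Fin m) (Fin s) ℝ) :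
    Matrix (Fin m) (Fin (k + s)) ℝ :=
  fun i => Fin.append (fun j => A i j) (fun j => B i j)

/-- `ω(P) = min (min_i ‖p_i‖₂, (1/√2) min_{i ≠ j} ‖p_i - p_j‖₂)`. -/
def omegaM {m : ℕ} {k : Type*} [Fintype k] (P : Matrix (Fin m) k ℝ) : ℝ :=
  sInf ({c | ∃ i, c = ‖toE fun a => P a i‖} ∪
    {c | ∃ i j, i ≠ j ∧ c = (Real.sqrt 2)⁻¹ * ‖(toE fun a => P a i) - toE fun a => P a j‖})

/-- `β(W) = min (ν_β(W), γ_β(W)/√2)` as in the paper. -/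
def beta {m r : ℕ} (f : E m → ℝ) (W : Matrix (Fin m) (Fin r) ℝ) : ℝ :=
  sInf ({c | ∃ j : Fin r,
      c = ‖resid f (W.submatrix id fun p : {i // i ≠ j} => (p : Fin r)) (toE fun a => W a j)‖} ∪
    {c | ∃ (i j : Fin r) (J : Finset (Fin r)), i ≠ j ∧ i ∉ J ∧ j ∉ J ∧
      c = (Real.sqrt 2)⁻¹ *
        ‖resid f (W.submatrix id fun p : J => (p : Fin r)) (toE fun a => W a i) -
         resid f (W.submatrix id fun p : J => (p : Fin r)) (toE fun a => W a j)‖})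

/-- Singular values of `B` in nonincreasing order (`i`-th largest at index `i`). -/
def singVals {m s : ℕ} (B : Matrix (Fin m) (Fin s) ℝ) : Fin s → ℝ := fun i =>
  Real.sqrt (((Matrix.isHermitian_conjTranspose_mul_self B).eigenvalues ∘
    Tuple.sort (Matrix.isHermitian_conjTranspose_mul_self B).eigenvalues) i.rev)

/-- The spectral norm `‖N‖₂` (ℓ₂ operator norm). -/
def spec {m s : ℕ} (N : Matrix (Fin m) (Fin s) ℝ) : ℝ :=
  ‖LinearMap.toContinuousLinearMap (Matrix.toEuclideanLin N)‖

lemma simplex_compact (n : Type*) [Fintype n] : IsCompact (simplex n) := by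
  have hsub : simplex n ⊆ Set.Icc (0 : n → ℝ) 1 := by
    rintro y ⟨h1, h2⟩
    constructor
    · intro i; exact h1 i
    · intro i
      calc y i ≤ ∑ j, y j := Finset.single_le_sum (fun j _ => h1 j) (Finset.mem_univ i)
        _ ≤ 1 := h2
  have hclosed : IsClosed (simplex n) := by
    have h1 : IsClosed {y : n → ℝ | ∀ i, 0 ≤ y i} := by
      have : {y : n → ℝ | ∀ i, 0 ≤ y i} = ⋂ i, {y : n → ℝ | 0 ≤ y i} := by
        ext y; simp
      rw [this]
      exact isClosed_iInter fun i => isClosed_le continuous_const (continuous_apply i)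
    have h2 : IsClosed {y : n → ℝ | ∑ i, y i ≤ 1} :=
      isClosed_le (by continuity) continuous_const
    exact (h1.inter h2 : IsClosed ({y : n → ℝ | ∀ i, 0 ≤ y i} ∩ {y | ∑ i, y i ≤ 1}))
  exact (isCompact_Icc).of_isClosed_subset hclosed hsub

lemma argminSimplex_spec {m : ℕ} {n : Type*} [Fintype n] (f : E m → ℝ) (f' : E m → E m)
    {μ L : ℝ} (hf : GoodF f f' μ L) (B : Matrix (Fin m) n ℝ) (x : E m) :
    argminSimplex f B x ∈ simplex n ∧
      ∀ z ∈ simplex n, f (x - toE (B.mulVec (argminSimplex f B x))) ≤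
        f (x - toE (B.mulVec z)) := by
  have hfc : Continuous f := by
    apply continuous_iff_continuousAt.2
    intro y
    exact (hf.grad y).hasFDerivAt.continuousAt
  have hcont : Continuous fun y : n → ℝ => f (x - toE (B.mulVec y)) := by
    apply hfc.comp
    have hlin : Continuous fun y : n → ℝ => toE (B.mulVec y) := by
      have : Continuous fun y : n → ℝ => B.mulVec y := by
        apply continuous_pi
        intro i
        simp only [Matrix.mulVec, dotProduct]
        exact continuous_finset_sum _ fun j _ => (continuous_const.mul (continuous_apply j))
      exact (PiLp.continuous_toLp 2 _).comp this
    exact continuous_const.sub hlin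
  have hne : (simplex n).Nonempty := ⟨0, fun i => le_refl 0, by simp⟩
  obtain ⟨y0, hy0, hmin⟩ := (simplex_compact n).exists_isMinOn hne hcont.continuousOn
  exact Classical.epsilon_spec (p := fun y => y ∈ simplex n ∧
    ∀ z ∈ simplex n, f (x - toE (B.mulVec y)) ≤ f (x - toE (B.mulVec z)))
    ⟨y0, hy0, fun z hz => hmin hz⟩

theorem stmt5 (m k s : ℕ) (μ L : ℝ) (f : E m → ℝ) (f' : E m → E m) (hf : GoodF f f' μ L)
    (A : Matrix (Fin m) (Fin k) ℝ) (B : Matrix (Fin m) (Fin s) ℝ) :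
    ∀ j : Fin k, alpha (appendMat A B) ≤ ‖resid f B (toE fun i => A i j)‖ := by
  intro j
  set x0 : E m := toE fun i => A i j with hx0
  obtain ⟨hmem, -⟩ := argminSimplex_spec f f' hf B x0
  set ys := argminSimplex f B x0 with hys
  set xx : Fin (k + s) → ℝ := Fin.append (fun _ => 0) ys with hxx
  have hxx_simplex : xx ∈ simplex (Fin (k + s)) := by
    constructor
    · intro i
      refine Fin.addCases (fun p => ?_) (fun p => ?_) i
      · simp [hxx, Fin.append_left]
      · simp only [hxx, Fin.append_right]
        exact hmem.1 p
    · rw [show (∑ i, xx i) = ∑ i : Fin k, xx (Fin.castAdd s i) +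
        ∑ i : Fin s, xx (Fin.natAdd k i) from Fin.sum_univ_add _]
      simp only [hxx, Fin.append_left, Fin.append_right, Finset.sum_const_zero, zero_add]
      exact hmem.2
  have hmv : (appendMat A B).mulVec xx = B.mulVec ys := by
    funext i
    simp only [Matrix.mulVec, dotProduct]
    rw [show (∑ p, appendMat A B i p * xx p) =
      ∑ p : Fin k, appendMat A B i (Fin.castAdd s p) * xx (Fin.castAdd s p) +
      ∑ p : Fin s, appendMat A B i (Fin.natAdd k p) * xx (Fin.natAdd k p) from
      Fin.sum_univ_add _]
    simp [hxx, appendMat, Fin.append_left, Fin.append_right]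
  have hcol : (toE fun i => appendMat A B i (Fin.castAdd s j)) = x0 := by
    ext i
    simp [appendMat, Fin.append_left, hx0, toE]
  have hbdd : BddBelow {c | ∃ (j : Fin (k + s)) (x : Fin (k + s) → ℝ),
      x ∈ simplex (Fin (k + s)) ∧ x j = 0 ∧
      c = ‖toE (fun i => appendMat A B i j) - toE ((appendMat A B).mulVec x)‖} := by
    refine ⟨0, ?_⟩
    rintro c ⟨j', x', -, -, rfl⟩
    exact norm_nonneg _
  have hmemset : ‖resid f B x0‖ ∈ {c | ∃ (j : Fin (k + s)) (x : Fin (k + s) → ℝ),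
      x ∈ simplex (Fin (k + s)) ∧ x j = 0 ∧
      c = ‖toE (fun i => appendMat A B i j) - toE ((appendMat A B).mulVec x)‖} := by
    refine ⟨Fin.castAdd s j, xx, hxx_simplex, ?_, ?_⟩
    · simp [hxx, Fin.append_left]
    · rw [hcol, hmv]
      rfl
  exact csInf_le hbdd hmemset
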